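/- Let G be a simple graph on a finite vertex type and let e = uv be an edge of G. Then the permanental polynomial of the adjacency matrix satisfies ψ(A(G)) = ψ(A(G − e)) + ψ(A(G − u − v)) + 2·Σ_{C ∈ 𝔠_G(e)} (−1)^{|V(C)|}·ψ(A(G − V(C))). -/

import Mathlib

open Polynomial Matrix

attribute [local instance] Classical.propDecidable

noncomputable section

/-- The permanent of a square matrix: `per M = ∑_{σ} ∏_i M i (σ i)`. -/
def Matrix.per {n R : Type*} [Fintype n] [DecidableEq n] [CommRing R]
    (M : Matrix n n R) : R :=
  ∑ σ : Equiv.Perm n, ∏ i, M i (σ i)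

/-- The characteristic polynomial `φ(M) = det (x·I - M)`. -/
def phi {n R : Type*} [Fintype n] [DecidableEq n] [CommRing R]
    (M : Matrix n n (Polynomial R)) : Polynomial R :=
  ((Polynomial.X : Polynomial R) • (1 : Matrix n n (Polynomial R)) - M).det

/-- The permanental polynomial `ψ(M) = per (x·I - M)`. -/
def psi {n R : Type*} [Fintype n] [DecidableEq n] [CommRing R]
    (M : Matrix n n (Polynomial R)) : Polynomial R :=
  ((Polynomial.X : Polynomial R) • (1 : Matrix n n (Polynomial R)) - M).per

variable {V : Type*}

/-- The principal submatrix of `M` obtained by deleting the rows and columns indexed by `S`. -/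
def delSub {R : Type*} (M : Matrix V V R) (S : Set V) :
    Matrix {w : V // w ∉ S} {w : V // w ∉ S} R :=
  M.submatrix Subtype.val Subtype.val

/-- `C` is a cycle of `G`: a subgraph of `G` that is connected, has nonempty vertex set,
and in which every vertex of `C` has degree exactly `2` in `C`. -/
def IsCycleSub (G : SimpleGraph V) (C : G.Subgraph) : Prop :=
  C.Connected ∧ C.verts.Nonempty ∧ ∀ w ∈ C.verts, (C.neighborSet w).ncard = 2

variable [Fintype V] [DecidableEq V]

/-- The degree diagonal matrix `D(G)` of a graph. -/
def degMat (R : Type*) [CommRing R] (G : SimpleGraph V) [DecidableRel G.Adj] :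
    Matrix V V R :=
  Matrix.diagonal fun w => (G.degree w : R)



/-! ### Auxiliary machinery -/

section PermExpOuter
open Equiv Finset
variable {n : Type*} [Fintype n] [DecidableEq n]


open Equiv Finset

variable {n : Type*} [Fintype n] [DecidableEq n]

lemma Equiv.Perm.apply_inv_self {α : Type*} (f : Equiv.Perm α) (x : α) : f (f⁻¹ x) = x :=
  f.apply_symm_apply x

lemma Equiv.Perm.inv_apply_self {α : Type*} (f : Equiv.Perm α) (x : α) : f⁻¹ (f x) = x :=
  f.symm_apply_apply x

/-- The weight of a permutation. -/
noncomputable def wtp (σ : Equiv.Perm n) : Polynomial ℤ :=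
  Polynomial.X ^ (σ.supportᶜ.card) * (-1) ^ (σ.support.card)

/-- The weighted validity indicator. -/
noncomputable def wv (P : n → n → Prop) (σ : Equiv.Perm n) : Polynomial ℤ :=
  if (∀ i, σ i ≠ i → P i (σ i)) then wtp σ else 0

lemma ite_congr_iff {α : Sort*} {P Q : Prop} [Decidable P] [Decidable Q] {a b : α}
    (h : P ↔ Q) : (if P then a else b) = (if Q then a else b) := by
  by_cases hP : P
  · rw [if_pos hP, if_pos (h.1 hP)]
  · rw [if_neg hP, if_neg (fun hq => hP (h.2 hq))]

lemma wv_eq {P : n → n → Prop} {m : Type*} [Fintype m] [DecidableEq m] {Q : m → m → Prop}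
    {σ₁ : Equiv.Perm n} {σ₂ : Equiv.Perm m}
    (hval : (∀ i, σ₁ i ≠ i → P i (σ₁ i)) ↔ (∀ i, σ₂ i ≠ i → Q i (σ₂ i)))
    (hw : wtp σ₁ = wtp σ₂) : wv P σ₁ = wv Q σ₂ := by
  rw [wv, wv, hw]
  exact ite_congr_iff hval

lemma psi_eq_sum (B : Matrix n n (Polynomial ℤ)) (P : n → n → Prop)
    (hd : ∀ i, B i i = 0) (h1 : ∀ i j, i ≠ j → P i j → B i j = 1)
    (h0 : ∀ i j, i ≠ j → ¬ P i j → B i j = 0) :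
    psi B = ∑ σ : Equiv.Perm n, wv P σ := by
  unfold psi Matrix.per
  refine Finset.sum_congr rfl fun σ _ => ?_
  by_cases hv : ∀ i, σ i ≠ i → P i (σ i)
  · rw [wv, if_pos hv]
    rw [← Finset.prod_mul_prod_compl σ.support]
    have hmov : ∀ i ∈ σ.support,
        ((Polynomial.X : Polynomial ℤ) • (1 : Matrix n n (Polynomial ℤ)) - B) i (σ i)
          = -1 := by
      intro i hi
      have hne : σ i ≠ i := Equiv.Perm.mem_support.1 hi
      rw [Matrix.sub_apply, Matrix.smul_apply, Matrix.one_apply_ne (Ne.symm hne),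
        h1 i (σ i) (Ne.symm hne) (hv i hne)]
      simp
    have hfix : ∀ i ∈ σ.supportᶜ,
        ((Polynomial.X : Polynomial ℤ) • (1 : Matrix n n (Polynomial ℤ)) - B) i (σ i)
          = Polynomial.X := by
      intro i hi
      have hii : σ i = i := by
        have := Finset.mem_compl.1 hi
        simpa [Equiv.Perm.notMem_support] using this
      rw [hii, Matrix.sub_apply, Matrix.smul_apply, Matrix.one_apply_eq, hd i]
      simp
    rw [Finset.prod_congr rfl hmov, Finset.prod_congr rfl hfix, Finset.prod_const,
      Finset.prod_const, wtp, mul_comm]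
  · rw [wv, if_neg hv]
    push_neg at hv
    obtain ⟨i, hne, hnp⟩ := hv
    refine Finset.prod_eq_zero (Finset.mem_univ i) ?_
    rw [Matrix.sub_apply, Matrix.smul_apply, Matrix.one_apply_ne (Ne.symm hne),
      h0 i (σ i) (Ne.symm hne) hnp]
    simp

lemma support_ofSubtype {p : n → Prop} [DecidablePred p] (τ : Equiv.Perm (Subtype p)) :
    (Equiv.Perm.ofSubtype τ).support = τ.support.map (Function.Embedding.subtype p) := by
  ext x
  simp only [Equiv.Perm.mem_support, Finset.mem_map, Function.Embedding.coe_subtype]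
  by_cases hx : p x
  · rw [Equiv.Perm.ofSubtype_apply_of_mem τ hx]
    constructor
    · intro h
      exact ⟨⟨x, hx⟩, fun hc => h (by rw [hc]), rfl⟩
    · rintro ⟨a, ha, rfl⟩ hc
      exact ha (Subtype.ext hc)
  · rw [Equiv.Perm.ofSubtype_apply_of_not_mem τ hx]
    simp only [ne_eq, not_true_eq_false, false_iff, not_exists, not_and]
    rintro a _ rfl
    exact hx a.2

lemma disjoint_mul_ofSubtype {p : n → Prop} [DecidablePred p] (c : Equiv.Perm n)
    (hc : ∀ x, ¬ p x ↔ c x ≠ x) (τ : Equiv.Perm (Subtype p)) :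
    Equiv.Perm.Disjoint c (Equiv.Perm.ofSubtype τ) := by
  intro x
  by_cases hx : p x
  · exact Or.inl (by_contra fun h => ((hc x).2 h) hx)
  · exact Or.inr (Equiv.Perm.ofSubtype_apply_of_not_mem τ hx)

lemma card_support_mul_ofSubtype {p : n → Prop} [DecidablePred p] (c : Equiv.Perm n)
    (hc : ∀ x, ¬ p x ↔ c x ≠ x) (τ : Equiv.Perm (Subtype p)) :
    (c * Equiv.Perm.ofSubtype τ).support.card = c.support.card + τ.support.card := by
  rw [(disjoint_mul_ofSubtype c hc τ).card_support_mul, support_ofSubtype, Finset.card_map]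

lemma apply_mul_ofSubtype_of_mem {p : n → Prop} [DecidablePred p] (c : Equiv.Perm n)
    (hc : ∀ x, ¬ p x ↔ c x ≠ x) (τ : Equiv.Perm (Subtype p)) {x : n} (hx : p x) :
    (c * Equiv.Perm.ofSubtype τ) x = ((τ ⟨x, hx⟩ : Subtype p) : n) := by
  have h1 : (Equiv.Perm.ofSubtype τ) x = ((τ ⟨x, hx⟩ : Subtype p) : n) :=
    Equiv.Perm.ofSubtype_apply_of_mem τ hx
  have h2 : c (((τ ⟨x, hx⟩ : Subtype p) : n)) = ((τ ⟨x, hx⟩ : Subtype p) : n) := by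
    by_contra h
    exact ((hc _).2 h) (τ ⟨x, hx⟩).2
  rw [Equiv.Perm.mul_apply, h1, h2]

lemma apply_mul_ofSubtype_of_not_mem {p : n → Prop} [DecidablePred p] (c : Equiv.Perm n)
    (hc : ∀ x, ¬ p x ↔ c x ≠ x) (τ : Equiv.Perm (Subtype p)) {x : n} (hx : ¬ p x) :
    (c * Equiv.Perm.ofSubtype τ) x = c x := by
  rw [Equiv.Perm.mul_apply, Equiv.Perm.ofSubtype_apply_of_not_mem τ hx]

lemma compl_support_mul_ofSubtype {p : n → Prop} [DecidablePred p] (c : Equiv.Perm n)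
    (hc : ∀ x, ¬ p x ↔ c x ≠ x) (τ : Equiv.Perm (Subtype p)) :
    ((c * Equiv.Perm.ofSubtype τ).supportᶜ)
      = (τ.supportᶜ).map (Function.Embedding.subtype p) := by
  ext x
  simp only [Finset.mem_compl, Equiv.Perm.mem_support, not_not, Finset.mem_map,
    Function.Embedding.coe_subtype]
  by_cases hx : p x
  · rw [apply_mul_ofSubtype_of_mem c hc τ hx]
    constructor
    · intro h
      refine ⟨⟨x, hx⟩, ?_, rfl⟩
      exact Subtype.ext h
    · rintro ⟨a, ha, rfl⟩
      rw [ha]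
  · rw [apply_mul_ofSubtype_of_not_mem c hc τ hx]
    constructor
    · intro h
      exact absurd h ((hc x).1 hx)
    · rintro ⟨a, _, rfl⟩
      exact absurd a.2 hx

lemma wtp_mul_ofSubtype {p : n → Prop} [DecidablePred p] (c : Equiv.Perm n)
    (hc : ∀ x, ¬ p x ↔ c x ≠ x) (τ : Equiv.Perm (Subtype p)) :
    wtp (c * Equiv.Perm.ofSubtype τ) = (-1) ^ c.support.card * wtp τ := by
  rw [wtp, wtp, card_support_mul_ofSubtype c hc τ, compl_support_mul_ofSubtype c hc τ,
    Finset.card_map, pow_add]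
  ring


end PermExpOuter

section CycleMachinery
open Equiv Finset SimpleGraph
variable {G : SimpleGraph V}



open Equiv Finset SimpleGraph



lemma ncard_two_eq {s : Set V} (hs : s.ncard = 2) {a b : V} (ha : a ∈ s) (hb : b ∈ s)
    (hab : a ≠ b) : s = {a, b} := by
  refine (Set.eq_of_subset_of_ncard_le ?_ ?_ (Set.toFinite s)).symm
  · rintro x hx
    rcases hx with rfl | hx
    · exact ha
    · rwa [Set.mem_singleton_iff.1 hx]
  · rw [hs, Set.ncard_pair hab]

/-- The neighbor of `w` other than `b`, in a subgraph where `w` has exactly two neighbors. -/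
noncomputable def nbrOther {G : SimpleGraph V} (C : G.Subgraph) (w b : V) : V :=
  if h : ∃ x, C.Adj w x ∧ x ≠ b ∧ (∀ y, C.Adj w y → y ≠ b → y = x) then h.choose else w

lemma nbrOther_spec {C : G.Subgraph} (hdeg : ∀ w ∈ C.verts, (C.neighborSet w).ncard = 2)
    {w b : V} (hw : C.Adj w b) :
    C.Adj w (nbrOther C w b) ∧ nbrOther C w b ≠ b ∧
      (∀ y, C.Adj w y → y ≠ b → y = nbrOther C w b) := by
  have hN := hdeg w hw.fst_mem
  obtain ⟨x, y, hxy, hset⟩ := Set.ncard_eq_two.1 hN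
  have hmem : ∀ z, C.Adj w z ↔ z = x ∨ z = y := by
    intro z
    constructor
    · intro hz
      have : z ∈ C.neighborSet w := hz
      rw [hset] at this
      simpa using this
    · rintro (rfl | rfl)
      · have : z ∈ C.neighborSet w := by rw [hset]; exact Set.mem_insert z {y}
        exact this
      · have : z ∈ C.neighborSet w := by rw [hset]; exact Set.mem_insert_iff.2 (Or.inr rfl)
        exact this
  have hex : ∃ x', C.Adj w x' ∧ x' ≠ b ∧ (∀ y', C.Adj w y' → y' ≠ b → y' = x') := by
    rcases (hmem b).1 hw with rfl | rfl
    · refine ⟨y, (hmem y).2 (Or.inr rfl), hxy.symm, ?_⟩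
      intro z hz hzb
      rcases (hmem z).1 hz with rfl | rfl
      · exact absurd rfl hzb
      · rfl
    · refine ⟨x, (hmem x).2 (Or.inl rfl), hxy, ?_⟩
      intro z hz hzb
      rcases (hmem z).1 hz with rfl | rfl
      · rfl
      · exact absurd rfl hzb
  rw [nbrOther, dif_pos hex]
  exact hex.choose_spec

/-- The pair-trajectory walking around a cycle subgraph. -/
noncomputable def trajP {G : SimpleGraph V} (C : G.Subgraph) (u v : V) : ℕ → V × V
  | 0 => (u, v)
  | (n+1) => ((trajP C u v n).2, nbrOther C (trajP C u v n).2 (trajP C u v n).1)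

/-- `IsTraversal C u v c` : `c` is a cyclic permutation traversing the cycle subgraph `C`,
starting along the edge `uv`. -/
def IsTraversal {G : SimpleGraph V} (C : G.Subgraph) (u v : V) (c : Equiv.Perm V) : Prop :=
  c.IsCycle ∧ (↑c.support : Set V) = C.verts ∧ c u = v ∧ ∀ a ∈ c.support, C.Adj a (c a)

lemma three_le_ncard_verts {C : G.Subgraph}
    (hdeg : ∀ w ∈ C.verts, (C.neighborSet w).ncard = 2) {u v : V} (huv : C.Adj u v) :
    3 ≤ C.verts.ncard := by
  have hN := hdeg u huv.fst_mem
  have hsub : insert u (C.neighborSet u) ⊆ C.verts := by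
    rintro x (rfl | hx)
    · exact huv.fst_mem
    · exact SimpleGraph.Subgraph.Adj.snd_mem hx
  have hu : u ∉ C.neighborSet u := fun h => (Subgraph.Adj.ne h) rfl
  have : (insert u (C.neighborSet u)).ncard = 3 := by
    rw [Set.ncard_insert_of_notMem hu (Set.toFinite _), hN]
  calc 3 = (insert u (C.neighborSet u)).ncard := this.symm
    _ ≤ C.verts.ncard := Set.ncard_le_ncard hsub (Set.toFinite _)

lemma cycle_sq_ne {c : Equiv.Perm V} (hc : c.IsCycle) (h3 : 3 ≤ c.support.card)
    {a : V} (ha : a ∈ c.support) : c a ≠ c⁻¹ a := by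
  intro h
  have h2 : (c ^ 2) a = a := by
    have : c (c a) = c (c⁻¹ a) := by rw [h]
    simpa [pow_succ, Equiv.Perm.mul_apply] using this
  have hpow : c ^ 2 = 1 := (hc.pow_eq_one_iff' (Equiv.Perm.mem_support.1 ha)).2 h2
  have := Nat.le_of_dvd two_pos (hc.orderOf ▸ orderOf_dvd_of_pow_eq_one hpow)
  omega

lemma traversal_nbhd {C : G.Subgraph}
    (hdeg : ∀ w ∈ C.verts, (C.neighborSet w).ncard = 2) {u v : V} (huv : C.Adj u v)
    {c : Equiv.Perm V} (hc : IsTraversal C u v c) {a : V} (ha : a ∈ c.support) :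
    C.neighborSet a = {c a, c⁻¹ a} ∧ c a ≠ c⁻¹ a := by
  obtain ⟨hcyc, hverts, hcu, hadj⟩ := hc
  have h3 : 3 ≤ c.support.card := by
    have := three_le_ncard_verts hdeg huv
    rwa [← hverts, Set.ncard_coe_finset] at this
  have hne := cycle_sq_ne hcyc h3 ha
  have hinv : c⁻¹ a ∈ c.support := by
    rw [← Equiv.Perm.support_inv] at ha ⊢
    exact Equiv.Perm.apply_mem_support.2 ha
  have hadj2 : C.Adj a (c⁻¹ a) := by
    have := hadj _ hinv
    rw [Equiv.Perm.apply_inv_self] at this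
    exact this.symm
  refine ⟨ncard_two_eq (hdeg a ?_) (hadj a ha) hadj2 hne, hne⟩
  rw [← hverts]
  exact ha

lemma traversal_unique {C : G.Subgraph}
    (hdeg : ∀ w ∈ C.verts, (C.neighborSet w).ncard = 2) {u v : V} (huv : C.Adj u v)
    {c₁ c₂ : Equiv.Perm V} (h1 : IsTraversal C u v c₁) (h2 : IsTraversal C u v c₂) :
    c₁ = c₂ := by
  have hsupp : c₁.support = c₂.support :=
    Finset.coe_injective (by rw [h1.2.1, h2.2.1])
  have hu1 : u ∈ c₁.support := by
    rw [Equiv.Perm.mem_support, h1.2.2.1]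
    exact huv.ne.symm
  have hu2 : u ∈ c₂.support := hsupp ▸ hu1
  have hpow1 : ∀ k : ℕ, (c₁ ^ k) u ∈ c₁.support :=
    fun k => Equiv.Perm.pow_apply_mem_support.2 hu1
  have key : ∀ k : ℕ, (c₁ ^ k) u = (c₂ ^ k) u ∧ (c₁ ^ (k+1)) u = (c₂ ^ (k+1)) u := by
    intro k
    induction k with
    | zero => exact ⟨rfl, by simpa [pow_one] using h1.2.2.1.trans h2.2.2.1.symm⟩
    | succ k ih =>
      refine ⟨ih.2, ?_⟩
      set a := (c₁ ^ (k+1)) u with hadef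
      have ha1 : a ∈ c₁.support := hpow1 (k+1)
      have ha2 : a ∈ c₂.support := hsupp ▸ ha1
      have hmemN : c₂ a ∈ C.neighborSet a := h2.2.2.2 a ha2
      rw [(traversal_nbhd hdeg huv h1 ha1).1] at hmemN
      simp only [Set.mem_insert_iff, Set.mem_singleton_iff] at hmemN
      have hstep : ∀ (c : Equiv.Perm V) (m : ℕ), (c ^ (m+1)) u = c ((c ^ m) u) := by
        intro c m
        rw [pow_succ' c m]
        rfl
      rcases hmemN with h | h
      · rw [hstep c₁ (k+1), hstep c₂ (k+1), ← ih.2, ← hadef, h]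
      · exfalso
        have e1 : c₁⁻¹ a = (c₁ ^ k) u := by
          rw [hadef, hstep c₁ k, Equiv.Perm.inv_apply_self]
        have e2 : c₂⁻¹ a = (c₂ ^ k) u := by
          rw [ih.2, hstep c₂ k, Equiv.Perm.inv_apply_self]
        have : c₂ a = c₂⁻¹ a := by rw [h, e1, e2, ih.1]
        have h3 : 3 ≤ c₂.support.card := by
          have := three_le_ncard_verts hdeg huv
          rwa [← h2.2.1, Set.ncard_coe_finset] at this
        exact cycle_sq_ne h2.1 h3 ha2 this
  ext x
  by_cases hx : x ∈ c₁.support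
  · have hsc : c₁.SameCycle u x :=
      h1.1.sameCycle (Equiv.Perm.mem_support.1 hu1) (Equiv.Perm.mem_support.1 hx)
    obtain ⟨k, _, hk⟩ := hsc.exists_pow_eq'
    have hstep : ∀ (c : Equiv.Perm V) (m : ℕ), (c ^ (m+1)) u = c ((c ^ m) u) := by
      intro c m
      rw [pow_succ' c m]
      rfl
    have := (key k).2
    rw [hstep c₁ k, hstep c₂ k, hk, ← (key k).1, hk] at this
    exact this
  · have hx2 : x ∉ c₂.support := hsupp ▸ hx
    rw [Equiv.Perm.notMem_support.1 hx, Equiv.Perm.notMem_support.1 hx2]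

lemma exists_traversal {C : G.Subgraph} (hconn : C.Connected)
    (hdeg : ∀ w ∈ C.verts, (C.neighborSet w).ncard = 2) {u v : V} (huv : C.Adj u v) :
    ∃ c, IsTraversal C u v c := by
  classical
  set f : ℕ → V := fun k => (trajP C u v k).1 with hf
  have htps : ∀ n, trajP C u v (n+1)
      = ((trajP C u v n).2, nbrOther C (trajP C u v n).2 (trajP C u v n).1) := fun n => rfl
  have hadjP : ∀ n, C.Adj (trajP C u v n).1 (trajP C u v n).2 := by
    intro n
    induction n with
    | zero => exact huv
    | succ n ih => rw [htps]; exact (nbrOther_spec hdeg ih.symm).1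
  have hsnd : ∀ n, (trajP C u v n).2 = f (n+1) := by
    intro n
    simp only [hf]
    rw [htps n]
  have htpair : ∀ n, trajP C u v n = (f n, f (n+1)) := by
    intro n
    exact Prod.ext rfl (hsnd n).symm
  have hAdj : ∀ n, C.Adj (f n) (f (n+1)) := by
    intro n
    have := hadjP n
    rwa [htpair n] at this
  have hrec : ∀ n, f (n+2) = nbrOther C (f (n+1)) (f n) := by
    intro n
    calc f (n+2) = (trajP C u v (n+1)).2 := (hsnd (n+1)).symm
      _ = nbrOther C (trajP C u v n).2 (trajP C u v n).1 := by rw [htps n]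
      _ = nbrOther C (f (n+1)) (f n) := by rw [htpair n]
  have hne1 : ∀ n, f (n+1) ≠ f n := fun n => ((hAdj n).ne).symm
  have hne2 : ∀ n, f (n+2) ≠ f n := by
    intro n
    rw [hrec n]
    exact (nbrOther_spec hdeg (hAdj n).symm).2.1
  have hback : ∀ n, nbrOther C (f (n+1)) (f (n+2)) = f n := by
    intro n
    exact ((nbrOther_spec hdeg (hAdj (n+1))).2.2 (f n) (hAdj n).symm (hne2 n).symm ).symm
  have hbackP : ∀ k m, trajP C u v (k+1) = trajP C u v (m+1) → trajP C u v k = trajP C u v m := by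
    intro k m h
    rw [htpair (k+1), htpair (m+1)] at h
    have h1 : f (k+1) = f (m+1) := congrArg Prod.fst h
    have h2 : f (k+2) = f (m+2) := congrArg Prod.snd h
    rw [htpair k, htpair m, ← hback k, ← hback m, h1, h2]
  have hbackN : ∀ t k m, trajP C u v (k+t) = trajP C u v (m+t) → trajP C u v k = trajP C u v m := by
    intro t
    induction t with
    | zero => intro k m h; exact h
    | succ t ih => intro k m h; exact ih k m (hbackP (k+t) (m+t) h)
  have hex : ∃ p, 0 < p ∧ trajP C u v p = trajP C u v 0 := by
    have hni : ¬ Function.Injective (fun n : Fin (Fintype.card (V × V) + 1) => trajP C u v n) := by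
      intro hinj
      have := Fintype.card_le_of_injective _ hinj
      simp at this
    rw [Function.not_injective_iff] at hni
    obtain ⟨i, j, hij, hne⟩ := hni
    have hgen : ∀ (a b : ℕ), a < b → trajP C u v a = trajP C u v b → ∃ p, 0 < p ∧ trajP C u v p = trajP C u v 0 := by
      intro a b hab he
      refine ⟨b - a, by omega, ?_⟩
      refine hbackN a _ _ ?_
      have e1 : b - a + a = b := by omega
      have e2 : 0 + a = a := by omega
      rw [e1, e2]
      exact he.symm
    rcases Nat.lt_or_ge (i : ℕ) (j : ℕ) with h | h
    · exact hgen i j h hij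
    · have : (j:ℕ) < (i:ℕ) := by
        rcases Nat.lt_or_ge (j : ℕ) (i : ℕ) with h' | h'
        · exact h'
        · exact absurd (Fin.ext (le_antisymm h' h)) hne
      exact hgen j i this hij.symm
  set P := Nat.find hex with hPdef
  obtain ⟨hPpos, hPeq⟩ := Nat.find_spec hex
  have hmin : ∀ q, 0 < q → q < P → trajP C u v q ≠ trajP C u v 0 :=
    fun q h1 h2 he => (Nat.find_min hex h2) ⟨h1, he⟩
  have hper : ∀ k, trajP C u v (k + P) = trajP C u v k := by
    intro k
    induction k with
    | zero => simpa using hPeq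
    | succ k ih =>
      have e : (k+1) + P = (k + P) + 1 := by omega
      rw [e, htps (k+P), htps k, ih]
  have fper : ∀ k, f (k + P) = f k := by
    intro k
    have := hper k
    rw [htpair (k+P), htpair k] at this
    exact congrArg Prod.fst this
  have hfP : f P = f 0 ∧ f (P+1) = f 1 := by
    have := hPeq
    rw [htpair P, htpair 0] at this
    exact ⟨congrArg Prod.fst this, congrArg Prod.snd this⟩
  have hP3 : 3 ≤ P := by
    by_contra hcon
    have : P = 1 ∨ P = 2 := by omega
    rcases this with e | e
    · rw [e] at hfP
      exact hne1 0 hfP.1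
    · rw [e] at hfP
      exact hne2 0 hfP.1
  have hNf : ∀ k, C.neighborSet (f k) = {f (k+1), f (k + P - 1)} := by
    intro k
    have hmem1 : C.Adj (f k) (f (k+1)) := hAdj k
    have e1 : (k + P - 1) + 1 = k + P := by omega
    have hmem2 : C.Adj (f k) (f (k + P - 1)) := by
      have := hAdj (k + P - 1)
      rw [e1, fper k] at this
      exact this.symm
    have hne12 : f (k+1) ≠ f (k + P - 1) := by
      have h2 := hne2 (k + P - 1)
      have e2 : (k + P - 1) + 2 = (k+1) + P := by omega
      rw [e2, fper (k+1)] at h2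
      exact h2
    exact ncard_two_eq (hdeg (f k) hmem1.fst_mem) hmem1 hmem2 hne12
  have hinj : ∀ i j, i < j → j < P → f i ≠ f j := by
    intro i j hij hjP heq
    have hj1 : f (j+1) ∈ C.neighborSet (f j) := hAdj j
    rw [← heq, hNf i] at hj1
    simp only [Set.mem_insert_iff, Set.mem_singleton_iff] at hj1
    rcases hj1 with h | h
    · have hpair : trajP C u v (j - i + i) = trajP C u v (0 + i) := by
        have e1 : j - i + i = j := by omega
        have e2 : 0 + i = i := by omega
        rw [e1, e2, htpair i, htpair j, heq, h]
      exact hmin (j - i) (by omega) (by omega) (hbackN i (j-i) 0 hpair)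
    · set n := i + P - 1 with hn
      have hjn : j ≤ n := by omega
      have hrefl : ∀ t, t ≤ n → f (j + t) = f (n - t + 1) ∧ f (j + t + 1) = f (n - t) := by
        intro t
        induction t with
        | zero =>
          intro _
          constructor
          · have e : n - 0 + 1 = i + P := by omega
            rw [e, fper i]
            simpa using heq.symm
          · simpa using h
        | succ t ih =>
          intro ht
          obtain ⟨ih1, ih2⟩ := ih (by omega)
          constructor
          · have e : n - (t+1) + 1 = n - t := by omega
            rw [e]
            exact ih2
          · have e1 : f (j + (t+1) + 1) = nbrOther C (f (j + t + 1)) (f (j + t)) := hrec (j + t)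
            rw [e1, ih1, ih2]
            have e2 : n - (t+1) + 1 = n - t := by omega
            have e3 : n - (t+1) + 2 = n - t + 1 := by omega
            have hb := hback (n - (t+1))
            rw [e2, e3] at hb
            exact hb
      have hd1 : 1 ≤ n + 1 - j := by omega
      obtain ⟨t, ht⟩ : ∃ t, n + 1 - j = 2*t+1 ∨ n + 1 - j = 2*t+2 := ⟨(n - j) / 2, by omega⟩
      rcases ht with ht | ht
      · have h2 := (hrefl t (by omega)).2
        have e : n - t = j + t := by omega
        rw [e] at h2
        exact hne1 (j+t) h2
      · have h1 := (hrefl t (by omega)).1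
        have e : n - t + 1 = j + t + 2 := by omega
        rw [e] at h1
        exact hne2 (j+t) h1.symm
  -- the cyclic permutation from the list of vertices
  set l : List V := (List.range P).map f with hl
  have hlen : l.length = P := by simp [hl]
  have hmemf : ∀ x, x ∈ l ↔ ∃ k, k < P ∧ f k = x := by
    intro x
    simp only [hl, List.mem_map, List.mem_range]
  have hnodup : l.Nodup := by
    rw [hl]
    refine List.Nodup.map_on ?_ (List.nodup_range)
    intro a ha b hb hab
    rw [List.mem_range] at ha hb
    by_contra hne
    rcases Nat.lt_or_ge a b with hlt | hge
    · exact hinj a b hlt hb hab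
    · exact hinj b a (by omega) ha hab.symm
  have hgetl : ∀ (m : ℕ) (hm : m < l.length), l[m] = f m := by
    intro m hm
    simp [hl]
  set c := l.formPerm with hc
  have hcyc : c.IsCycle := List.isCycle_formPerm hnodup (by omega)
  have hsupport : c.support = l.toFinset := by
    refine List.support_formPerm_of_nodup l hnodup ?_
    intro x hx
    rw [hx] at hlen
    simp only [List.length_singleton] at hlen
    omega
  have happly : ∀ (m : ℕ), m < P → c (f m) = f ((m+1) % P) := by
    intro m hm
    have hm' : m < l.length := by omega
    have h1 := List.formPerm_apply_getElem l hnodup m hm'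
    rw [hgetl m hm'] at h1
    have h2 := hgetl ((m+1) % l.length) (Nat.mod_lt _ (by omega))
    rw [h2] at h1
    rw [hc, h1]
    congr 1
    rw [hlen]
  have hmodf : ∀ k, f (k % P) = f k := by
    have hperq : ∀ q r, f (r + P * q) = f r := by
      intro q
      induction q with
      | zero => simp
      | succ q ih =>
        intro r
        have e : r + P * (q+1) = (r + P * q) + P := by ring
        rw [e, fper (r + P * q), ih r]
    intro k
    conv_rhs => rw [← Nat.mod_add_div k P]
    exact (hperq (k / P) (k % P)).symm
  have hf0 : f 0 = u := rfl
  have hf1 : f 1 = v := by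
    have := htpair 0
    exact (congrArg Prod.snd this).symm
  have hcu : c u = v := by
    have := happly 0 (by omega)
    rw [hf0] at this
    rw [this]
    have e : (0+1) % P = 1 := Nat.mod_eq_of_lt (by omega)
    rw [e, hf1]
  have hcadj : ∀ a ∈ c.support, C.Adj a (c a) := by
    intro a ha
    simp only [hsupport, List.mem_toFinset, hmemf] at ha
    obtain ⟨k, hk, rfl⟩ := ha
    rw [happly k hk, hmodf (k+1)]
    exact hAdj k
  have hverts : (↑c.support : Set V) = C.verts := by
    rw [hsupport]
    ext x
    simp only [Finset.coe_sort_coe, Finset.mem_coe, List.mem_toFinset, hmemf]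
    constructor
    · rintro ⟨k, hk, rfl⟩
      exact (hAdj k).fst_mem
    · intro hx
      have hu' : u ∈ C.verts := huv.fst_mem
      have hreach : C.coe.Reachable ⟨u, hu'⟩ ⟨x, hx⟩ := hconn.coe.preconnected _ _
      obtain ⟨p⟩ := hreach
      have hstep : ∀ (a b : C.verts) (q : C.coe.Walk a b),
          (∃ k, k < P ∧ f k = ↑a) → ∃ k, k < P ∧ f k = ↑b := by
        intro a b q
        induction q with
        | nil => exact id
        | @cons a' c' b' hadj q ih =>
          intro ⟨k, hk, hfk⟩
          refine ih ?_
          have hcadj' : C.Adj (f k) ↑c' := by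
            rw [hfk]
            exact hadj
          have : (↑c' : V) ∈ C.neighborSet (f k) := hcadj'
          rw [hNf k] at this
          simp only [Set.mem_insert_iff, Set.mem_singleton_iff] at this
          rcases this with hh | hh
          · exact ⟨(k+1) % P, Nat.mod_lt _ (by omega), by rw [hmodf (k+1), hh]⟩
          · exact ⟨(k+P-1) % P, Nat.mod_lt _ (by omega), by rw [hmodf (k+P-1), hh]⟩
      exact hstep _ _ p ⟨0, by omega, hf0⟩
  exact ⟨c, hcyc, hverts, hcu, hcadj⟩




/-- The cycle subgraph traced by the cycle of `σ` through `u`. -/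
def permCycle (G : SimpleGraph V) (σ : Equiv.Perm V) (u : V) : G.Subgraph where
  verts := {x | x ∈ (σ.cycleOf u).support}
  Adj a b := G.Adj a b ∧ a ∈ (σ.cycleOf u).support ∧ b ∈ (σ.cycleOf u).support
    ∧ (σ a = b ∨ σ b = a)
  adj_sub h := h.1
  edge_vert h := h.2.1
  symm := by
    constructor
    intro a b h
    exact ⟨h.1.symm, h.2.2.1, h.2.1, h.2.2.2.symm⟩

section PhiSide

variable {σ : Equiv.Perm V} {u v : V}

lemma permCycle_verts : (permCycle G σ u).verts = ↑(σ.cycleOf u).support := rfl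

lemma cycleOf_agree {a : V} (ha : a ∈ (σ.cycleOf u).support) : σ.cycleOf u a = σ a := by
  rw [Equiv.Perm.mem_support_cycleOf_iff] at ha
  exact ha.1.cycleOf_apply

lemma cycleOf_mem_iff_apply {a : V} (hu : u ∈ σ.support) :
    σ a ∈ (σ.cycleOf u).support ↔ a ∈ (σ.cycleOf u).support := by
  rw [Equiv.Perm.mem_support_cycleOf_iff, Equiv.Perm.mem_support_cycleOf_iff,
    Equiv.Perm.sameCycle_apply_right]

variable (hval : ∀ i, σ i ≠ i → G.Adj i (σ i)) (h1 : σ u = v) (h2 : σ v ≠ u) (hne : u ≠ v)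

include h1 hne in
lemma hu_supp : u ∈ σ.support := by
  rw [Equiv.Perm.mem_support, h1]
  exact fun h => hne (h.symm)

include h1 hne in
lemma cycleOf_isCycle : (σ.cycleOf u).IsCycle :=
  Equiv.Perm.isCycle_cycleOf σ (Equiv.Perm.mem_support.1 (hu_supp h1 hne))

include h1 hne in
lemma u_mem_cycleOf : u ∈ (σ.cycleOf u).support :=
  Equiv.Perm.mem_support_cycleOf_iff.2 ⟨Equiv.Perm.SameCycle.refl σ u, hu_supp h1 hne⟩

include h1 hne in
lemma v_mem_cycleOf : v ∈ (σ.cycleOf u).support :=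
  Equiv.Perm.mem_support_cycleOf_iff.2 ⟨⟨1, by simpa using h1⟩, hu_supp h1 hne⟩

include h1 h2 hne in
lemma sv_mem_cycleOf : σ v ∈ (σ.cycleOf u).support :=
  Equiv.Perm.mem_support_cycleOf_iff.2
    ⟨Equiv.Perm.sameCycle_apply_right.2 ⟨1, by simpa using h1⟩, hu_supp h1 hne⟩

include h1 h2 hne in
lemma three_le_card_cycleOf : 3 ≤ (σ.cycleOf u).support.card := by
  have hvv : v ≠ σ v := by
    intro h
    exact hne (σ.injective (by rw [h1, ← h]))
  have huv2 : u ≠ σ v := fun h => h2 (h.symm)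
  have hsub : ({u, v, σ v} : Finset V) ⊆ (σ.cycleOf u).support := by
    intro x hx
    simp only [Finset.mem_insert, Finset.mem_singleton] at hx
    rcases hx with rfl | rfl | rfl
    · exact u_mem_cycleOf h1 hne
    · exact v_mem_cycleOf h1 hne
    · exact sv_mem_cycleOf h1 h2 hne
  have hcard : ({u, v, σ v} : Finset V).card = 3 := by
    rw [Finset.card_insert_of_notMem (by simp [hne, huv2]),
      Finset.card_insert_of_notMem (by simp [hvv]), Finset.card_singleton]
  rw [← hcard]
  exact Finset.card_le_card hsub

include hval h1 h2 hne in
lemma permCycle_traversal : IsTraversal (permCycle G σ u) u v (σ.cycleOf u) := by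
  refine ⟨cycleOf_isCycle h1 hne, rfl, by rw [Equiv.Perm.cycleOf_apply_self, h1], ?_⟩
  intro a ha
  have hag := cycleOf_agree ha
  have hsa : σ a ≠ a := by
    have := Equiv.Perm.support_cycleOf_le σ u ha
    exact Equiv.Perm.mem_support.1 this
  refine ⟨by rw [hag]; exact hval a hsa, ha, ?_, Or.inl hag.symm⟩
  rw [hag]
  exact (cycleOf_mem_iff_apply (hu_supp h1 hne)).2 ha

include hval h1 h2 hne in
lemma permCycle_nbhd {w : V} (hw : w ∈ (permCycle G σ u).verts) :
    (permCycle G σ u).neighborSet w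
      = {σ.cycleOf u w, (σ.cycleOf u)⁻¹ w} := by
  set c := σ.cycleOf u with hc
  have hcmem : ∀ a, a ∈ c.support ↔ a ∈ (permCycle G σ u).verts := fun a => Iff.rfl
  have htrav := permCycle_traversal hval h1 h2 hne
  have hwsupp : w ∈ c.support := hw
  ext b
  simp only [Subgraph.mem_neighborSet, Set.mem_insert_iff, Set.mem_singleton_iff]
  constructor
  · rintro ⟨hGab, hws, hbs, hor | hor⟩
    · left
      rw [cycleOf_agree hws, hor]
    · right
      have : c b = w := by rw [cycleOf_agree hbs, hor]
      rw [← this, Equiv.Perm.inv_apply_self]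
  · rintro (rfl | rfl)
    · exact htrav.2.2.2 w hwsupp
    · have hbs : c⁻¹ w ∈ c.support := by
        rw [← Equiv.Perm.support_inv] at hwsupp ⊢
        exact Equiv.Perm.apply_mem_support.2 hwsupp
      have := htrav.2.2.2 _ hbs
      rw [Equiv.Perm.apply_inv_self] at this
      exact this.symm

include hval h1 h2 hne in
lemma permCycle_isCycleSub : IsCycleSub G (permCycle G σ u) ∧ (permCycle G σ u).Adj u v := by
  set c := σ.cycleOf u with hc
  have htrav := permCycle_traversal hval h1 h2 hne
  have hcyc : c.IsCycle := cycleOf_isCycle h1 hne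
  have h3 : 3 ≤ c.support.card := three_le_card_cycleOf h1 h2 hne
  have husupp : u ∈ c.support := u_mem_cycleOf h1 hne
  have hadjuv : (permCycle G σ u).Adj u v := by
    refine ⟨?_, husupp, v_mem_cycleOf h1 hne, Or.inl h1⟩
    have : σ u ≠ u := by rw [h1]; exact fun h => hne h.symm
    rw [← h1]
    exact hval u this
  refine ⟨⟨?_, ⟨u, husupp⟩, ?_⟩, hadjuv⟩
  · -- connectivity
    rw [SimpleGraph.Subgraph.connected_iff]
    refine ⟨⟨?_⟩, ⟨u, husupp⟩⟩
    have hreach : ∀ k : ℕ, ∃ (hk : (c ^ k) u ∈ (permCycle G σ u).verts),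
        (permCycle G σ u).coe.Reachable ⟨u, husupp⟩ ⟨(c ^ k) u, hk⟩ := by
      intro k
      induction k with
      | zero => exact ⟨husupp, by rfl⟩
      | succ k ih =>
        obtain ⟨hk, hr⟩ := ih
        have hks : (c ^ k) u ∈ c.support := hk
        have hadj := htrav.2.2.2 _ hks
        have hk1 : (c ^ (k+1)) u ∈ (permCycle G σ u).verts := by
          show (c ^ (k+1)) u ∈ c.support
          exact Equiv.Perm.pow_apply_mem_support.2 husupp
        refine ⟨hk1, hr.trans (SimpleGraph.Adj.reachable ?_)⟩
        show (permCycle G σ u).Adj ((c ^ k) u) ((c ^ (k+1)) u)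
        have e : (c ^ (k+1)) u = c ((c ^ k) u) := by
          rw [pow_succ' c k]
          rfl
        rw [e]
        exact hadj
    intro x y
    obtain ⟨x, hx⟩ := x
    obtain ⟨y, hy⟩ := y
    have hgetk : ∀ z (hz : z ∈ (permCycle G σ u).verts),
        (permCycle G σ u).coe.Reachable ⟨u, husupp⟩ ⟨z, hz⟩ := by
      intro z hz
      have hzs : z ∈ c.support := hz
      have hsc : c.SameCycle u z :=
        hcyc.sameCycle (Equiv.Perm.mem_support.1 husupp) (Equiv.Perm.mem_support.1 hzs)
      obtain ⟨k, _, hk⟩ := hsc.exists_pow_eq'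
      obtain ⟨hk', hr⟩ := hreach k
      have : (⟨(c ^ k) u, hk'⟩ : (permCycle G σ u).verts) = ⟨z, hz⟩ := Subtype.ext hk
      rwa [this] at hr
    exact ((hgetk x hx).symm).trans (hgetk y hy)
  · -- degree 2
    intro w hw
    rw [permCycle_nbhd hval h1 h2 hne hw]
    exact Set.ncard_pair (cycle_sq_ne hcyc h3 hw)


lemma cycleOf_inv_mul_fix {σ : Equiv.Perm V} {u a : V}
    (ha : a ∈ (σ.cycleOf u).support) : ((σ.cycleOf u)⁻¹ * σ) a = a := by
  rw [Equiv.Perm.mul_apply, ← cycleOf_agree ha, Equiv.Perm.inv_apply_self]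

lemma cycleOf_inv_mul_out {σ : Equiv.Perm V} {u : V} (hu : u ∈ σ.support) {a : V}
    (ha : a ∉ (σ.cycleOf u).support) : ((σ.cycleOf u)⁻¹ * σ) a = σ a := by
  have hsa : σ a ∉ (σ.cycleOf u).support := fun h => ha ((cycleOf_mem_iff_apply hu).1 h)
  rw [Equiv.Perm.mul_apply]
  apply Equiv.Perm.notMem_support.1
  rwa [Equiv.Perm.support_inv]

lemma phiPerm_cond (G : SimpleGraph V) (σ : Equiv.Perm V) (u : V) :
    ∀ x : V, (x ∉ (permCycle G σ u).verts)
      ↔ (((σ.cycleOf u)⁻¹ * σ) x ∉ (permCycle G σ u).verts) := by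
  intro x
  have hvmem : ∀ y : V, y ∈ (permCycle G σ u).verts ↔ y ∈ (σ.cycleOf u).support :=
    fun y => Iff.rfl
  by_cases hu : u ∈ σ.support
  · constructor
    · intro hx
      rw [hvmem] at hx
      rw [cycleOf_inv_mul_out hu hx, hvmem]
      exact fun hmem => hx ((cycleOf_mem_iff_apply hu).1 hmem)
    · intro hx
      by_contra hmem
      rw [hvmem] at hmem
      rw [cycleOf_inv_mul_fix hmem] at hx
      exact hx ((hvmem x).2 hmem)
      
  · have hemp : (σ.cycleOf u).support = ∅ := by
      rw [Equiv.Perm.support_cycleOf_eq_nil_iff]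
      exact hu
    constructor
    · intro _ hmem
      rw [hvmem, hemp] at hmem
      exact absurd hmem (Finset.notMem_empty _)
    · intro _ hmem
      rw [hvmem, hemp] at hmem
      exact absurd hmem (Finset.notMem_empty _)

/-- The restriction of `σ` to the complement of its `u`-cycle. -/
noncomputable def phiPerm (G : SimpleGraph V) (σ : Equiv.Perm V) (u : V) :
    Equiv.Perm {w : V // w ∉ (permCycle G σ u).verts} :=
  Equiv.Perm.subtypePerm ((σ.cycleOf u)⁻¹ * σ) (fun x => (phiPerm_cond G σ u x).symm)

/-- A canonical traversal of a cycle subgraph. -/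
noncomputable def theTraversal (G : SimpleGraph V) (C : G.Subgraph) (u v : V) :
    Equiv.Perm V :=
  if h : C.Connected ∧ (∀ w ∈ C.verts, (C.neighborSet w).ncard = 2) ∧ C.Adj u v
  then Classical.choose (exists_traversal h.1 h.2.1 h.2.2) else 1

lemma theTraversal_spec {C : G.Subgraph} (hconn : C.Connected)
    (hdeg : ∀ w ∈ C.verts, (C.neighborSet w).ncard = 2) (huv : C.Adj u v) :
    IsTraversal C u v (theTraversal G C u v) := by
  rw [theTraversal, dif_pos (⟨hconn, hdeg, huv⟩ :
    C.Connected ∧ (∀ w ∈ C.verts, (C.neighborSet w).ncard = 2) ∧ C.Adj u v)]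
  exact Classical.choose_spec _

lemma sigma_perm_ext {C1 C2 : G.Subgraph} (h : C1 = C2)
    {τ1 : Equiv.Perm {w : V // w ∉ C1.verts}} {τ2 : Equiv.Perm {w : V // w ∉ C2.verts}}
    (h2 : ∀ (x : V) (hx1 : x ∉ C1.verts) (hx2 : x ∉ C2.verts),
      (↑(τ1 ⟨x, hx1⟩) : V) = ↑(τ2 ⟨x, hx2⟩)) :
    (⟨C1, τ1⟩ : (C : G.Subgraph) × Equiv.Perm {w : V // w ∉ C.verts}) = ⟨C2, τ2⟩ := by
  subst h
  have : τ1 = τ2 := by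
    ext x
    exact h2 ↑x x.2 x.2
  rw [this]

end PhiSide


section PsiSide

variable {C : G.Subgraph} {u v : V} {c : Equiv.Perm V}

/-- Reconstruction: `permCycle` of a composite permutation recovers the cycle subgraph. -/
lemma permCycle_of_traversal
    (hdeg : ∀ w ∈ C.verts, (C.neighborSet w).ncard = 2)
    (huv : C.Adj u v) (htrav : IsTraversal C u v c)
    {σ' : Equiv.Perm V} (hfix : ∀ a ∈ C.verts, σ' a = a) :
    (c * σ').cycleOf u = c ∧ permCycle G (c * σ') u = C := by
  have husupp : u ∈ c.support := by
    rw [Equiv.Perm.mem_support, htrav.2.2.1]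
    exact huv.ne.symm
  have hdisj : c.Disjoint σ' := by
    intro x
    by_cases hx : x ∈ C.verts
    · exact Or.inr (hfix x hx)
    · refine Or.inl ?_
      have : x ∉ c.support := by
        rw [← Finset.mem_coe, htrav.2.1]
        exact hx
      exact Equiv.Perm.notMem_support.1 this
  have hcyceq : (c * σ').cycleOf u = c := by
    rw [Equiv.Perm.cycleOf_mul_of_apply_right_eq_self hdisj.commute u
      (hfix u huv.fst_mem)]
    exact htrav.1.cycleOf_eq (by rw [htrav.2.2.1]; exact huv.ne.symm)
  have happly : ∀ a ∈ c.support, (c * σ') a = c a := by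
    intro a ha
    have : σ' a = a := hfix a (by rw [← htrav.2.1]; exact ha)
    rw [Equiv.Perm.mul_apply, this]
  have h3 : 3 ≤ c.support.card := by
    have h3' : 3 ≤ C.verts.ncard := by
      have hN := hdeg u huv.fst_mem
      have hsub : insert u (C.neighborSet u) ⊆ C.verts := by
        rintro x (rfl | hx)
        · exact huv.fst_mem
        · exact SimpleGraph.Subgraph.Adj.snd_mem hx
      have hu : u ∉ C.neighborSet u := fun h => (Subgraph.Adj.ne h) rfl
      have : (insert u (C.neighborSet u)).ncard = 3 := by
        rw [Set.ncard_insert_of_notMem hu (Set.toFinite _), hN]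
      calc 3 = (insert u (C.neighborSet u)).ncard := this.symm
        _ ≤ C.verts.ncard := Set.ncard_le_ncard hsub (Set.toFinite _)
    rwa [← htrav.2.1, Set.ncard_coe_finset] at h3'
  refine ⟨hcyceq, ?_⟩
  apply SimpleGraph.Subgraph.ext
  · rw [permCycle_verts, hcyceq, htrav.2.1]
  · ext a b
    simp only [permCycle, hcyceq]
    constructor
    · rintro ⟨hG, has, hbs, hor | hor⟩
      · rw [happly a has] at hor
        rw [← hor]
        exact htrav.2.2.2 a has
      · rw [happly b hbs] at hor
        rw [← hor]
        exact (htrav.2.2.2 b hbs).symm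
    · intro hCab
      have has : a ∈ c.support := by
        rw [← Finset.mem_coe, htrav.2.1]
        exact hCab.fst_mem
      have hbs : b ∈ c.support := by
        rw [← Finset.mem_coe, htrav.2.1]
        exact hCab.snd_mem
      refine ⟨C.adj_sub hCab, has, hbs, ?_⟩
      -- b is one of the two neighbors of a
      have hsq := cycle_sq_ne htrav.1 h3 has
      have hmm1 : C.Adj a (c a) := htrav.2.2.2 a has
      have hbs' : c⁻¹ a ∈ c.support := by
        rw [← Equiv.Perm.support_inv] at has ⊢
        exact Equiv.Perm.apply_mem_support.2 has
      have hmm2 : C.Adj a (c⁻¹ a) := by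
        have := htrav.2.2.2 _ hbs'
        rw [Equiv.Perm.apply_inv_self] at this
        exact this.symm
      have haverts : a ∈ C.verts := hCab.fst_mem
      have hN : C.neighborSet a = {c a, c⁻¹ a} :=
        ncard_two_eq (hdeg a haverts) hmm1 hmm2 hsq
      have : b ∈ C.neighborSet a := hCab
      rw [hN] at this
      rcases this with rfl | hb
      · exact Or.inl (happly a has)
      · rw [Set.mem_singleton_iff] at hb
        subst hb
        refine Or.inr ?_
        rw [happly _ hbs', Equiv.Perm.apply_inv_self]
    
end PsiSide


lemma subgraph_finite : Finite G.Subgraph := by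
  have hinj : Function.Injective (fun C : G.Subgraph => (C.verts, C.Adj)) := by
    intro C1 C2 h
    exact SimpleGraph.Subgraph.ext (congrArg Prod.fst h) (congrArg Prod.snd h)
  exact Finite.of_injective _ hinj

end CycleMachinery



section MainLemmas
open Equiv Finset SimpleGraph Polynomial

variable {G : SimpleGraph V} {u v : V}

lemma sum_F0 [DecidableRel G.Adj] (he : G.Adj u v) :
    ∑ σ : Equiv.Perm V, wv (G.deleteEdges {s(u,v)}).Adj σ
      = ∑ σ ∈ (Finset.univ.filter fun σ : Equiv.Perm V => ¬ σ u = v).filter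
          (fun σ => ¬ σ v = u), wv G.Adj σ := by
  have hne : u ≠ v := he.ne
  rw [Finset.filter_filter, Finset.sum_filter]
  refine Finset.sum_congr rfl fun σ _ => ?_
  split_ifs with h
  · obtain ⟨hA, hB⟩ := h
    refine wv_eq ?_ rfl
    constructor
    · intro hval i hi
      exact (SimpleGraph.deleteEdges_adj.1 (hval i hi)).1
    · intro hval i hi
      refine SimpleGraph.deleteEdges_adj.2 ⟨hval i hi, ?_⟩
      rw [Set.mem_singleton_iff, Sym2.eq_iff]
      rintro (⟨rfl, h2⟩ | ⟨h2, rfl⟩)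
      · exact hA h2
      · exact hB (congrArg σ h2.symm)
  · rw [wv, if_neg]
    intro hval
    rcases not_and_or.1 h with hA | hB
    · rw [not_not] at hA
      have hsu : σ u ≠ u := by rw [hA]; exact fun hh => hne hh.symm
      have h2 := hval u hsu
      rw [SimpleGraph.deleteEdges_adj] at h2
      apply h2.2
      rw [hA]
      rfl
    · rw [not_not] at hB
      have hsv : σ v ≠ v := by rw [hB]; exact fun hh => hne hh
      have h2 := hval v hsv
      rw [SimpleGraph.deleteEdges_adj] at h2
      apply h2.2
      rw [hB]
      exact Sym2.eq_swap

lemma sum_F3 :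
    ∑ σ ∈ (Finset.univ.filter fun σ : Equiv.Perm V => ¬ σ u = v).filter
        (fun σ => σ v = u), wv G.Adj σ
      = ∑ σ ∈ (Finset.univ.filter fun σ : Equiv.Perm V => σ u = v).filter
          (fun σ => ¬ σ v = u), wv G.Adj σ := by
  simp only [Finset.filter_filter]
  refine Finset.sum_bij' (fun σ _ => σ⁻¹) (fun σ _ => σ⁻¹) ?_ ?_ ?_ ?_ ?_
  · intro σ hσ
    simp only [Finset.mem_filter, Finset.mem_univ, true_and] at hσ ⊢
    constructor
    · rw [Equiv.Perm.inv_eq_iff_eq]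
      exact hσ.2.symm
    · rw [Equiv.Perm.inv_eq_iff_eq]
      intro h
      exact hσ.1 h.symm
  · intro σ hσ
    simp only [Finset.mem_filter, Finset.mem_univ, true_and] at hσ ⊢
    constructor
    · intro h
      rw [Equiv.Perm.inv_eq_iff_eq] at h
      exact hσ.2 h.symm
    · rw [Equiv.Perm.inv_eq_iff_eq]
      exact hσ.1.symm
  · intro σ _
    simp
  · intro σ _
    simp
  · intro σ _
    refine wv_eq ?_ (by rw [wtp, wtp, Equiv.Perm.support_inv])
    have hval : (∀ i, σ i ≠ i → G.Adj i (σ i)) ↔ (∀ i, σ⁻¹ i ≠ i → G.Adj i (σ⁻¹ i)) := by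
      constructor
      · intro h i hi
        have h2 : σ (σ⁻¹ i) ≠ σ⁻¹ i := by
          rw [Equiv.Perm.apply_inv_self]
          exact fun e => hi e.symm
        have := h (σ⁻¹ i) h2
        rw [Equiv.Perm.apply_inv_self] at this
        exact this.symm
      · intro h i hi
        have h2 : σ⁻¹ (σ i) ≠ σ i := by
          rw [Equiv.Perm.inv_apply_self]
          exact fun e => hi e.symm
        have := h (σ i) h2
        rw [Equiv.Perm.inv_apply_self] at this
        exact this.symm
    exact hval

lemma sum_F1 [DecidableRel G.Adj] (he : G.Adj u v) :
    ∑ τ : Equiv.Perm {w : V // w ∉ ({u, v} : Set V)},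
        wv (fun (a b : {w : V // w ∉ ({u, v} : Set V)}) => G.Adj ↑a ↑b) τ
      = ∑ σ ∈ (Finset.univ.filter fun σ : Equiv.Perm V => σ u = v).filter
          (fun σ => σ v = u), wv G.Adj σ := by
  have hne : u ≠ v := he.ne
  have humem : ¬ (u ∉ ({u, v} : Set V)) := fun h => h (Set.mem_insert u {v})
  have hvmem : ¬ (v ∉ ({u, v} : Set V)) := fun h => h (Set.mem_insert_iff.2 (Or.inr rfl))
  have hc : ∀ x : V, ¬ (x ∉ ({u,v} : Set V)) ↔ Equiv.swap u v x ≠ x := by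
    intro x
    rw [not_not, Equiv.swap_apply_ne_self_iff]
    simp only [Set.mem_insert_iff, Set.mem_singleton_iff]
    exact ⟨fun h => ⟨hne, h⟩, fun h => h.2⟩
  have happu : ∀ τ : Equiv.Perm {w : V // w ∉ ({u, v} : Set V)},
      (Equiv.swap u v * Equiv.Perm.ofSubtype τ) u = v := by
    intro τ
    rw [apply_mul_ofSubtype_of_not_mem _ hc τ humem, Equiv.swap_apply_left]
  have happv : ∀ τ : Equiv.Perm {w : V // w ∉ ({u, v} : Set V)},
      (Equiv.swap u v * Equiv.Perm.ofSubtype τ) v = u := by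
    intro τ
    rw [apply_mul_ofSubtype_of_not_mem _ hc τ hvmem, Equiv.swap_apply_right]
  simp only [Finset.filter_filter]
  have hmemt : ∀ (τ : Equiv.Perm {w : V // w ∉ ({u, v} : Set V)}), τ ∈ Finset.univ →
      Equiv.swap u v * Equiv.Perm.ofSubtype τ
        ∈ Finset.univ.filter (fun σ : Equiv.Perm V => σ u = v ∧ σ v = u) := by
    intro τ _
    simp only [Finset.mem_filter, Finset.mem_univ, true_and]
    exact ⟨happu τ, happv τ⟩
  have hfixmem : ∀ (σ : Equiv.Perm V), σ u = v → σ v = u →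
      ∀ x : V, (x ∉ ({u,v} : Set V)) ↔ ((σ * Equiv.swap u v) x ∉ ({u,v} : Set V)) := by
    intro σ hA hB x
    constructor
    · intro hx
      simp only [Set.mem_insert_iff, Set.mem_singleton_iff, not_or] at hx
      have hxx : Equiv.swap u v x = x := Equiv.swap_apply_of_ne_of_ne hx.1 hx.2
      rw [Equiv.Perm.mul_apply, hxx]
      simp only [Set.mem_insert_iff, Set.mem_singleton_iff, not_or]
      constructor
      · intro h
        rw [← hB] at h
        exact hx.2 (σ.injective h)
      · intro h
        rw [← hA] at h
        exact hx.1 (σ.injective h)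
    · intro hx
      by_contra hmem
      simp only [not_not, Set.mem_insert_iff, Set.mem_singleton_iff] at hmem
      rcases hmem with rfl | rfl
      · rw [Equiv.Perm.mul_apply, Equiv.swap_apply_left, hB] at hx
        exact hx (Set.mem_insert x {v})
      · rw [Equiv.Perm.mul_apply, Equiv.swap_apply_right, hA] at hx
        exact hx (Set.mem_insert_iff.2 (Or.inr rfl))
  refine Finset.sum_bij' (fun τ _ => Equiv.swap u v * Equiv.Perm.ofSubtype τ)
    (fun σ hσ => Equiv.Perm.subtypePerm (σ * Equiv.swap u v)
      (fun x => (hfixmem σ (by simp only [Finset.mem_filter] at hσ; exact hσ.2.1)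
        (by simp only [Finset.mem_filter] at hσ; exact hσ.2.2) x).symm))
    hmemt (fun σ hσ => Finset.mem_univ _) ?_ ?_ ?_
  · -- left inverse
    intro τ _
    ext x
    have hx : (x : V) ∉ ({u,v} : Set V) := x.2
    rw [Equiv.Perm.subtypePerm_apply]
    simp only [Equiv.Perm.mul_apply]
    have h1 : Equiv.swap u v (x : V) = x := by
      simp only [Set.mem_insert_iff, Set.mem_singleton_iff, not_or] at hx
      exact Equiv.swap_apply_of_ne_of_ne hx.1 hx.2
    rw [h1, Equiv.Perm.ofSubtype_apply_of_mem τ hx]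
    have h2 : ((τ ⟨x, hx⟩ : {w : V // w ∉ ({u,v} : Set V)}) : V) ∉ ({u,v} : Set V) :=
      (τ ⟨x, hx⟩).2
    simp only [Set.mem_insert_iff, Set.mem_singleton_iff, not_or] at h2
    rw [Equiv.swap_apply_of_ne_of_ne h2.1 h2.2]
  · -- right inverse
    intro σ hσ
    simp only [Finset.mem_filter, Finset.mem_univ, true_and] at hσ
    obtain ⟨hA, hB⟩ := hσ
    ext x
    rw [Equiv.Perm.mul_apply]
    by_cases hx : x ∉ ({u,v} : Set V)
    · have h0 := Equiv.Perm.ofSubtype_subtypePerm_of_mem (p := fun x => x ∉ ({u,v} : Set V)) (fun x => (hfixmem σ hA hB x).symm) hx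
      rw [h0, Equiv.Perm.mul_apply]
      simp only [Set.mem_insert_iff, Set.mem_singleton_iff, not_or] at hx
      rw [Equiv.swap_apply_of_ne_of_ne hx.1 hx.2]
      have h2 : σ x ∉ ({u,v} : Set V) := by
        intro hmem
        simp only [Set.mem_insert_iff, Set.mem_singleton_iff] at hmem
        rcases hmem with h | h
        · rw [← hB] at h
          exact hx.2 (σ.injective h)
        · rw [← hA] at h
          exact hx.1 (σ.injective h)
      simp only [Set.mem_insert_iff, Set.mem_singleton_iff, not_or] at h2
      rw [Equiv.swap_apply_of_ne_of_ne h2.1 h2.2]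
    · have h0 := Equiv.Perm.ofSubtype_subtypePerm_of_not_mem (p := fun x => x ∉ ({u,v} : Set V)) (fun x => (hfixmem σ hA hB x).symm) hx
      rw [h0]
      rw [not_not] at hx
      simp only [Set.mem_insert_iff, Set.mem_singleton_iff] at hx
      rcases hx with rfl | rfl
      · rw [Equiv.swap_apply_left]
        exact hA.symm
      · rw [Equiv.swap_apply_right]
        exact hB.symm
  · -- summand equality
    intro τ _
    have hw : wtp (Equiv.swap u v * Equiv.Perm.ofSubtype τ) = wtp τ := by
      rw [wtp_mul_ofSubtype _ hc τ, Equiv.Perm.card_support_swap hne]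
      norm_num
    refine wv_eq ?_ hw.symm
    constructor
    · intro h i hi
      by_cases hmem : i ∉ ({u,v} : Set V)
      · rw [apply_mul_ofSubtype_of_mem _ hc τ hmem] at hi ⊢
        refine h ⟨i, hmem⟩ ?_
        intro e
        exact hi (congrArg Subtype.val e)
      · rw [not_not] at hmem
        simp only [Set.mem_insert_iff, Set.mem_singleton_iff] at hmem
        rcases hmem with rfl | rfl
        · rw [happu τ]
          exact he
        · rw [happv τ]
          exact he.symm
    · intro h i hi
      have hmem : (i : V) ∉ ({u,v} : Set V) := i.2
      have h2 : (Equiv.swap u v * Equiv.Perm.ofSubtype τ) ↑i = ↑(τ i) := by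
        rw [apply_mul_ofSubtype_of_mem _ hc τ hmem]
      have h3 : (Equiv.swap u v * Equiv.Perm.ofSubtype τ) ↑i ≠ ↑i := by
        rw [h2]
        intro e
        exact hi (Subtype.ext e)
      have := h ↑i h3
      rwa [h2] at this

lemma sum_F2 [DecidableRel G.Adj] (he : G.Adj u v)
    (hfin : {C : G.Subgraph | IsCycleSub G C ∧ C.Adj u v}.Finite) :
    ∑ σ ∈ (Finset.univ.filter fun σ : Equiv.Perm V => σ u = v).filter
        (fun σ => ¬ σ v = u), wv G.Adj σ
      = ∑ C ∈ hfin.toFinset, (-1 : Polynomial ℤ) ^ C.verts.ncard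
          * ∑ τ : Equiv.Perm {w : V // w ∉ C.verts},
              wv (fun (a b : {w : V // w ∉ C.verts}) => G.Adj ↑a ↑b) τ := by
  have hne : u ≠ v := he.ne
  have hLHS : ∑ σ ∈ (Finset.univ.filter fun σ : Equiv.Perm V => σ u = v).filter
        (fun σ => ¬ σ v = u), wv G.Adj σ
      = ∑ σ ∈ Finset.univ.filter (fun σ : Equiv.Perm V =>
          (∀ i, σ i ≠ i → G.Adj i (σ i)) ∧ σ u = v ∧ ¬ σ v = u), wtp σ := by
    rw [Finset.filter_filter, Finset.sum_filter, Finset.sum_filter]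
    refine Finset.sum_congr rfl fun σ _ => ?_
    by_cases hAB : σ u = v ∧ ¬ σ v = u
    · rw [if_pos hAB, wv]
      by_cases hval : ∀ i, σ i ≠ i → G.Adj i (σ i)
      · rw [if_pos hval, if_pos (⟨hval, hAB⟩ : (∀ i, σ i ≠ i → G.Adj i (σ i)) ∧ σ u = v ∧ ¬ σ v = u)]
      · rw [if_neg hval, if_neg (fun hh => hval hh.1)]
    · rw [if_neg hAB, if_neg (fun hh => hAB hh.2)]
  have hRHS : ∀ C : G.Subgraph,
      (-1 : Polynomial ℤ) ^ C.verts.ncard * ∑ τ : Equiv.Perm {w : V // w ∉ C.verts},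
          wv (fun (a b : {w : V // w ∉ C.verts}) => G.Adj ↑a ↑b) τ
        = ∑ τ ∈ Finset.univ.filter (fun τ : Equiv.Perm {w : V // w ∉ C.verts} =>
            ∀ i, τ i ≠ i → G.Adj ↑i ↑(τ i)),
            (-1 : Polynomial ℤ) ^ C.verts.ncard * wtp τ := by
    intro C
    rw [← Finset.sum_filter_add_sum_filter_not Finset.univ
      (fun τ : Equiv.Perm {w : V // w ∉ C.verts} => ∀ i, τ i ≠ i → G.Adj ↑i ↑(τ i))
      (wv (fun (a b : {w : V // w ∉ C.verts}) => G.Adj ↑a ↑b))]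
    rw [mul_add, Finset.mul_sum, Finset.mul_sum]
    have hz : ∑ τ ∈ Finset.univ.filter (fun τ : Equiv.Perm {w : V // w ∉ C.verts} =>
        ¬ ∀ i, τ i ≠ i → G.Adj ↑i ↑(τ i)),
        (-1 : Polynomial ℤ) ^ C.verts.ncard * wv (fun (a b : {w : V // w ∉ C.verts}) => G.Adj ↑a ↑b) τ = 0 := by
      refine Finset.sum_eq_zero fun τ hτ => ?_
      rw [Finset.mem_filter] at hτ
      rw [wv, if_neg hτ.2, mul_zero]
    rw [hz, add_zero]
    refine Finset.sum_congr rfl fun τ hτ => ?_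
    rw [Finset.mem_filter] at hτ
    rw [wv, if_pos hτ.2]
  rw [hLHS]
  rw [Finset.sum_congr rfl (fun C _ => hRHS C)]
  rw [← Finset.sum_sigma hfin.toFinset
    (fun C => Finset.univ.filter (fun τ : Equiv.Perm {w : V // w ∉ C.verts} =>
      ∀ i, τ i ≠ i → G.Adj ↑i ↑(τ i)))
    (fun p => (-1 : Polynomial ℤ) ^ p.1.verts.ncard * wtp p.2)]
  -- the bijection
  refine Finset.sum_bij' (fun σ _ => (⟨permCycle G σ u, phiPerm G σ u⟩ :
      (C : G.Subgraph) × Equiv.Perm {w : V // w ∉ C.verts}))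
    (fun p _ => theTraversal G p.1 u v * Equiv.Perm.ofSubtype p.2) ?_ ?_ ?_ ?_ ?_
  · -- hi : phi σ ∈ S
    intro σ hσ
    simp only [Finset.mem_filter, Finset.mem_univ, true_and] at hσ
    obtain ⟨hval, h1, h2⟩ := hσ
    rw [Finset.mem_sigma]
    constructor
    · rw [Set.Finite.mem_toFinset]
      exact ⟨(permCycle_isCycleSub hval h1 h2 hne).1, (permCycle_isCycleSub hval h1 h2 hne).2⟩
    · rw [Finset.mem_filter]
      refine ⟨Finset.mem_univ _, ?_⟩
      intro i hi
      have hu : u ∈ σ.support := hu_supp h1 hne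
      have hx : (↑i : V) ∉ (σ.cycleOf u).support := i.2
      have happ : (↑(phiPerm G σ u i) : V) = ((σ.cycleOf u)⁻¹ * σ) ↑i := rfl
      rw [happ, cycleOf_inv_mul_out hu hx]
      have hne2 : σ ↑i ≠ ↑i := by
        intro e
        apply hi
        apply Subtype.ext
        rw [happ, cycleOf_inv_mul_out hu hx, e]
      exact hval ↑i hne2
  · -- hj : psi p ∈ A
    intro p hp
    rw [Finset.mem_sigma, Set.Finite.mem_toFinset, Finset.mem_filter] at hp
    obtain ⟨⟨hcycsub, huvC⟩, _, hvalτ⟩ := hp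
    obtain ⟨hconn, hnonempty, hdeg⟩ := hcycsub
    have trav := theTraversal_spec hconn hdeg huvC
    set c := theTraversal G p.1 u v with hcdef
    have hcnotp : ∀ x : V, ¬ (x ∉ p.1.verts) ↔ c x ≠ x := by
      intro x
      rw [not_not, ← trav.2.1, Finset.mem_coe, Equiv.Perm.mem_support]
    have h3 : 3 ≤ c.support.card := by
      have := three_le_ncard_verts hdeg huvC
      rwa [← trav.2.1, Set.ncard_coe_finset] at this
    have husupp : u ∈ c.support := by
      rw [Equiv.Perm.mem_support, trav.2.2.1]
      exact fun h => hne h.symm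
    simp only [Finset.mem_filter, Finset.mem_univ, true_and]
    refine ⟨?_, ?_, ?_⟩
    · intro i hi
      by_cases hip : i ∉ p.1.verts
      · rw [apply_mul_ofSubtype_of_mem c hcnotp p.2 hip] at hi ⊢
        have : p.2 ⟨i, hip⟩ ≠ ⟨i, hip⟩ := by
          intro e
          exact hi (congrArg Subtype.val e)
        exact hvalτ ⟨i, hip⟩ this
      · rw [apply_mul_ofSubtype_of_not_mem c hcnotp p.2 hip] at hi ⊢
        have his : i ∈ c.support := by
          rw [not_not] at hip
          rw [← Finset.mem_coe, trav.2.1]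
          exact hip
        exact p.1.adj_sub (trav.2.2.2 i his)
    · rw [apply_mul_ofSubtype_of_not_mem c hcnotp p.2 (not_not_intro huvC.fst_mem)]
      exact trav.2.2.1
    · rw [apply_mul_ofSubtype_of_not_mem c hcnotp p.2 (not_not_intro huvC.snd_mem)]
      intro hcv
      have hcvc : c v = c (c u) := by rw [trav.2.2.1]
      have : c u = c⁻¹ u := by
        have hu2 : c (c u) = u := by rw [← hcvc, hcv]
        conv_rhs => rw [← hu2]
        rw [Equiv.Perm.inv_apply_self]
      exact cycle_sq_ne trav.1 h3 husupp this
  · -- left inverse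
    intro σ hσ
    simp only [Finset.mem_filter, Finset.mem_univ, true_and] at hσ
    obtain ⟨hval, h1, h2⟩ := hσ
    dsimp only
    have hu : u ∈ σ.support := hu_supp h1 hne
    have hcycsub := permCycle_isCycleSub hval h1 h2 hne
    have travσ := permCycle_traversal hval h1 h2 hne
    have trav' := theTraversal_spec hcycsub.1.1 hcycsub.1.2.2 hcycsub.2
    have hceq : theTraversal G (permCycle G σ u) u v = σ.cycleOf u :=
      traversal_unique hcycsub.1.2.2 hcycsub.2 trav' travσ
    have hofsub : Equiv.Perm.ofSubtype (phiPerm G σ u) = (σ.cycleOf u)⁻¹ * σ := by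
      ext x
      by_cases hx : x ∉ (permCycle G σ u).verts
      · rw [phiPerm, Equiv.Perm.ofSubtype_subtypePerm_of_mem (fun x => (phiPerm_cond G σ u x).symm) hx]
      · rw [phiPerm, Equiv.Perm.ofSubtype_subtypePerm_of_not_mem (fun x => (phiPerm_cond G σ u x).symm) hx]
        rw [not_not] at hx
        have hxs : x ∈ (σ.cycleOf u).support := hx
        rw [cycleOf_inv_mul_fix hxs]
    rw [hceq, hofsub, mul_inv_cancel_left]
  · -- right inverse
    intro p hp
    rw [Finset.mem_sigma, Set.Finite.mem_toFinset, Finset.mem_filter] at hp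
    obtain ⟨⟨hcycsub, huvC⟩, _, hvalτ⟩ := hp
    obtain ⟨hconn, hnonempty, hdeg⟩ := hcycsub
    have trav := theTraversal_spec hconn hdeg huvC
    set c := theTraversal G p.1 u v with hcdef
    have hfix : ∀ a ∈ p.1.verts, Equiv.Perm.ofSubtype p.2 a = a := by
      intro a ha
      exact Equiv.Perm.ofSubtype_apply_of_not_mem p.2 (not_not_intro ha)
    obtain ⟨hcyceq, hCeq⟩ := permCycle_of_traversal hdeg huvC trav hfix
    obtain ⟨C, τ⟩ := p
    refine sigma_perm_ext hCeq ?_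
    intro x hx1 hx2
    have happ : (↑(phiPerm G (c * Equiv.Perm.ofSubtype τ) u ⟨x, hx1⟩) : V)
        = (((c * Equiv.Perm.ofSubtype τ).cycleOf u)⁻¹ * (c * Equiv.Perm.ofSubtype τ)) x := rfl
    rw [happ, hcyceq, inv_mul_cancel_left]
    exact Equiv.Perm.ofSubtype_apply_of_mem τ hx2
  · -- summand equality
    intro σ hσ
    simp only [Finset.mem_filter, Finset.mem_univ, true_and] at hσ
    obtain ⟨hval, h1, h2⟩ := hσ
    dsimp only
    have hu : u ∈ σ.support := hu_supp h1 hne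
    have hcnotp : ∀ x : V, ¬ (x ∉ (permCycle G σ u).verts) ↔ σ.cycleOf u x ≠ x := by
      intro x
      rw [not_not]
      have : x ∈ (permCycle G σ u).verts ↔ x ∈ (σ.cycleOf u).support := Iff.rfl
      rw [this, Equiv.Perm.mem_support]
    have hrecon : σ = σ.cycleOf u * Equiv.Perm.ofSubtype (phiPerm G σ u) := by
      have hofsub : Equiv.Perm.ofSubtype (phiPerm G σ u) = (σ.cycleOf u)⁻¹ * σ := by
        ext x
        by_cases hx : x ∉ (permCycle G σ u).verts
        · rw [phiPerm, Equiv.Perm.ofSubtype_subtypePerm_of_mem (fun x => (phiPerm_cond G σ u x).symm) hx]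
        · rw [phiPerm, Equiv.Perm.ofSubtype_subtypePerm_of_not_mem (fun x => (phiPerm_cond G σ u x).symm) hx]
          rw [not_not] at hx
          have hxs : x ∈ (σ.cycleOf u).support := hx
          rw [cycleOf_inv_mul_fix hxs]
      rw [hofsub, mul_inv_cancel_left]
    have hcard : (σ.cycleOf u).support.card = (permCycle G σ u).verts.ncard := by
      rw [permCycle_verts, Set.ncard_coe_finset]
    conv_lhs => rw [hrecon]
    rw [wtp_mul_ofSubtype _ hcnotp (phiPerm G σ u), hcard]


end MainLemmas

set_option maxHeartbeats 1000000 in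
theorem adjacency_permanental_edge_recursion
    {V : Type*} [Fintype V] [DecidableEq V]
    (G : SimpleGraph V) [DecidableRel G.Adj] (u v : V) (he : G.Adj u v) :
    psi (G.adjMatrix (Polynomial ℤ)) =
      psi ((G.deleteEdges {s(u, v)}).adjMatrix (Polynomial ℤ))
        + psi (delSub (G.adjMatrix (Polynomial ℤ)) {u, v})
        + 2 * ∑ᶠ C ∈ {C : G.Subgraph | IsCycleSub G C ∧ C.Adj u v},
          (-1 : Polynomial ℤ) ^ C.verts.ncard * psi (delSub (G.adjMatrix (Polynomial ℤ)) C.verts) := by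
  classical
  have hne : u ≠ v := he.ne
  have hfinite : Finite G.Subgraph := subgraph_finite
  have hfin : {C : G.Subgraph | IsCycleSub G C ∧ C.Adj u v}.Finite := Set.toFinite _
  -- expansions of the permanental polynomials into sums over permutations
  have hG : psi (G.adjMatrix (Polynomial ℤ)) = ∑ σ : Equiv.Perm V, wv G.Adj σ := by
    apply psi_eq_sum
    · intro i
      simp
    · intro i j _ h
      simp [h]
    · intro i j _ h
      simp [h]
  have hG' : psi ((G.deleteEdges {s(u,v)}).adjMatrix (Polynomial ℤ))
      = ∑ σ : Equiv.Perm V, wv (G.deleteEdges {s(u,v)}).Adj σ := by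
    apply psi_eq_sum
    · intro i
      rw [SimpleGraph.adjMatrix_apply, if_neg ((G.deleteEdges {s(u,v)}).irrefl)]
    · intro i j _ h
      rw [SimpleGraph.adjMatrix_apply, if_pos h]
    · intro i j _ h
      rw [SimpleGraph.adjMatrix_apply, if_neg h]
  have hsubuv : psi (delSub (G.adjMatrix (Polynomial ℤ)) {u, v})
      = ∑ τ : Equiv.Perm {w : V // w ∉ ({u, v} : Set V)},
          wv (fun (a b : {w : V // w ∉ ({u, v} : Set V)}) => G.Adj ↑a ↑b) τ := by
    apply psi_eq_sum
    · intro i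
      show G.adjMatrix (Polynomial ℤ) ↑i ↑i = 0
      simp
    · intro i j _ h
      show G.adjMatrix (Polynomial ℤ) ↑i ↑j = 1
      simp [h]
    · intro i j _ h
      show G.adjMatrix (Polynomial ℤ) ↑i ↑j = 0
      simp [h]
  have hsub : ∀ C : G.Subgraph, psi (delSub (G.adjMatrix (Polynomial ℤ)) C.verts)
      = ∑ τ : Equiv.Perm {w : V // w ∉ C.verts},
          wv (fun (a b : {w : V // w ∉ C.verts}) => G.Adj ↑a ↑b) τ := by
    intro C
    apply psi_eq_sum
    · intro i
      show G.adjMatrix (Polynomial ℤ) ↑i ↑i = 0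
      simp
    · intro i j _ h
      show G.adjMatrix (Polynomial ℤ) ↑i ↑j = 1
      simp [h]
    · intro i j _ h
      show G.adjMatrix (Polynomial ℤ) ↑i ↑j = 0
      simp [h]
  have hfs : ∑ᶠ C ∈ {C : G.Subgraph | IsCycleSub G C ∧ C.Adj u v},
      (-1 : Polynomial ℤ) ^ C.verts.ncard * psi (delSub (G.adjMatrix (Polynomial ℤ)) C.verts)
      = ∑ C ∈ hfin.toFinset, (-1 : Polynomial ℤ) ^ C.verts.ncard
          * psi (delSub (G.adjMatrix (Polynomial ℤ)) C.verts) := by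
    rw [← finsum_mem_coe_finset]
    congr 1
    rw [Set.Finite.coe_toFinset]
  rw [hG, hG']
  rw [hsubuv]
  rw [hfs]
  have hR : ∑ C ∈ hfin.toFinset, (-1 : Polynomial ℤ) ^ C.verts.ncard
        * psi (delSub (G.adjMatrix (Polynomial ℤ)) C.verts)
      = ∑ C ∈ hfin.toFinset, (-1 : Polynomial ℤ) ^ C.verts.ncard
        * ∑ τ : Equiv.Perm {w : V // w ∉ C.verts},
            wv (fun (a b : {w : V // w ∉ C.verts}) => G.Adj ↑a ↑b) τ := by
    refine Finset.sum_congr rfl fun C _ => ?_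
    rw [hsub C]
  rw [hR]
  rw [sum_F0 he, sum_F1 he, ← sum_F2 he hfin]
  rw [two_mul]
  rw [← Finset.sum_filter_add_sum_filter_not Finset.univ
    (fun σ : Equiv.Perm V => σ u = v) (wv G.Adj)]
  rw [← Finset.sum_filter_add_sum_filter_not
    (Finset.univ.filter (fun σ : Equiv.Perm V => σ u = v)) (fun σ => σ v = u) (wv G.Adj)]
  rw [← Finset.sum_filter_add_sum_filter_not
    (Finset.univ.filter (fun σ : Equiv.Perm V => ¬ σ u = v)) (fun σ => σ v = u) (wv G.Adj)]
  rw [sum_F3]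
  ring
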